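/- Every i-measure has finite total semivariation: if μ : 𝓜 → L(E,F) is an i-measure on a σ-algebra 𝓜 of subsets of a set Z, then ‖μ‖_Z < ∞. -/

import Mathlib

open Filter Topology ENNReal

/-- A series of bounded operators `∑ Tₙ` is *independently convergent* if
`∑ Tₙ xₙ` converges in norm for every bounded sequence `(xₙ)`. -/
def IndepConv {E F : Type*} [NormedAddCommGroup E] [NormedSpace ℝ E]
    [NormedAddCommGroup F] [NormedSpace ℝ F] (T : ℕ → E →L[ℝ] F) : Prop :=
  ∀ x : ℕ → E, (∃ C : ℝ, ∀ n, ‖x n‖ ≤ C) →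
    ∃ y : F, Tendsto (fun N => ∑ n ∈ Finset.range N, T n (x n)) atTop (𝓝 y)

/-- An *i-measure* is an operator-valued set function which is countably additive in the
strong operator topology, and such that `∑ μ(Aₙ)` is independently convergent for every
sequence of pairwise disjoint measurable sets `(Aₙ)`. -/
def IsIMeasure {Z E F : Type*} [MeasurableSpace Z]
    [NormedAddCommGroup E] [NormedSpace ℝ E] [NormedAddCommGroup F] [NormedSpace ℝ F]
    (μ : Set Z → E →L[ℝ] F) : Prop :=
  (∀ A : ℕ → Set Z, (∀ n, MeasurableSet (A n)) → Pairwise (Function.onFun Disjoint A) →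
    ∀ x : E,
      Tendsto (fun N => ∑ n ∈ Finset.range N, μ (A n) x) atTop (𝓝 (μ (⋃ n, A n) x))) ∧
  (∀ A : ℕ → Set Z, (∀ n, MeasurableSet (A n)) → Pairwise (Function.onFun Disjoint A) →
    IndepConv fun n => μ (A n))

/-- The semivariation `‖μ‖_A` of an operator-valued set function `μ` on a set `A`. -/
noncomputable def semivar {Z E F : Type*} [MeasurableSpace Z]
    [NormedAddCommGroup E] [NormedSpace ℝ E] [NormedAddCommGroup F] [NormedSpace ℝ F]
    (μ : Set Z → E →L[ℝ] F) (A : Set Z) : ℝ≥0∞ :=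
  ⨆ (N : ℕ) (B : ℕ → Set Z) (_ : ∀ n, MeasurableSet (B n)) (_ : ∀ n, B n ⊆ A)
    (_ : Pairwise (Function.onFun Disjoint B)) (x : ℕ → E) (_ : ∀ n, ‖x n‖ ≤ 1),
    ENNReal.ofReal ‖∑ n ∈ Finset.range N, μ (B n) (x n)‖

section aux

variable {Z E F : Type*} [MeasurableSpace Z]
  [NormedAddCommGroup E] [NormedSpace ℝ E] [NormedAddCommGroup F] [NormedSpace ℝ F]
  {μ : Set Z → E →L[ℝ] F}

lemma imeas_empty (hμ : IsIMeasure μ) (x : E) : μ ∅ x = 0 := by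
  have h := hμ.1 (fun _ => ∅) (fun _ => MeasurableSet.empty)
    (by intro m n _; simp [Function.onFun]) x
  rw [Set.iUnion_empty] at h
  have h2 : Tendsto (fun N => ∑ _n ∈ Finset.range (N + 1), μ ∅ x) atTop (𝓝 (μ ∅ x)) :=
    h.comp (tendsto_add_atTop_nat 1)
  have h3 := h2.sub h
  simp only [Finset.sum_range_succ, add_sub_cancel_left, sub_self] at h3
  have h0 : Tendsto (fun _ : ℕ => μ ∅ x) atTop (𝓝 (μ ∅ x)) := tendsto_const_nhds
  exact tendsto_nhds_unique h0 h3

lemma imeas_finpart (hμ : IsIMeasure μ) (n : ℕ) (P : ℕ → Set Z)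
    (hm : ∀ i, MeasurableSet (P i)) (hd : Pairwise (Function.onFun Disjoint P))
    (hpad : ∀ i, n ≤ i → P i = ∅) (x : E) :
    μ (⋃ i, P i) x = ∑ i ∈ Finset.range n, μ (P i) x := by
  have h := hμ.1 P hm hd x
  have heq : ∀ N, n ≤ N →
      ∑ i ∈ Finset.range N, μ (P i) x = ∑ i ∈ Finset.range n, μ (P i) x := by
    intro N hN
    exact (Finset.sum_subset (Finset.range_subset_range.2 hN) (fun i _ hi => by
      rw [hpad i (Nat.le_of_not_lt (by simpa using hi))]
      exact imeas_empty hμ x)).symm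
  have h2 : Tendsto (fun N => ∑ i ∈ Finset.range N, μ (P i) x) atTop
      (𝓝 (∑ i ∈ Finset.range n, μ (P i) x)) := by
    refine Tendsto.congr' ?_ tendsto_const_nhds
    filter_upwards [eventually_ge_atTop n] with N hN using (heq N hN).symm
  exact tendsto_nhds_unique h h2

lemma imeas_union_two (hμ : IsIMeasure μ) {A B : Set Z} (hA : MeasurableSet A)
    (hB : MeasurableSet B) (hd : Disjoint A B) (x : E) :
    μ (A ∪ B) x = μ A x + μ B x := by
  have h := imeas_finpart hμ 2 (fun i => if i = 0 then A else if i = 1 then B else ∅)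
    (fun i => by split <;> [exact hA; (split <;> [exact hB; exact MeasurableSet.empty])])
    (by
      intro i j hij
      simp only [Function.onFun]
      by_cases hi0 : i = 0 <;> by_cases hi1 : i = 1 <;> by_cases hj0 : j = 0 <;>
        by_cases hj1 : j = 1 <;> simp_all [hd, hd.symm])
    (fun i hi => by
      have h0 : i ≠ 0 := by omega
      have h1 : i ≠ 1 := by omega
      simp [h0, h1]) x
  have hU : (⋃ i, if i = 0 then A else if i = 1 then B else ∅) = A ∪ B := by
    ext z; simp only [Set.mem_iUnion, Set.mem_union]
    constructor
    · rintro ⟨i, hi⟩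
      by_cases h0 : i = 0
      · subst h0; simp at hi; exact Or.inl hi
      · by_cases h1 : i = 1
        · subst h1; simp at hi; exact Or.inr hi
        · simp [h0, h1] at hi
    · rintro (hz | hz)
      · exact ⟨0, by simpa using hz⟩
      · exact ⟨1, by simpa using hz⟩
  rw [hU] at h
  rw [h]
  simp [Finset.sum_range_succ]

lemma imeas_diff (hμ : IsIMeasure μ) {A B : Set Z} (hA : MeasurableSet A)
    (hB : MeasurableSet B) (hBA : B ⊆ A) (x : E) :
    μ (A \ B) x = μ A x - μ B x := by
  have h := imeas_union_two hμ hB (hA.diff hB) disjoint_sdiff_self_right x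
  rw [Set.union_diff_cancel hBA] at h
  rw [h]; abel

end aux

section aux2

variable {Z E F : Type*} [MeasurableSpace Z]
  [NormedAddCommGroup E] [NormedSpace ℝ E] [NormedAddCommGroup F] [NormedSpace ℝ F]
  {μ : Set Z → E →L[ℝ] F}

lemma le_semivar {A : Set Z} (N : ℕ) (B : ℕ → Set Z) (x : ℕ → E)
    (hm : ∀ n, MeasurableSet (B n)) (hs : ∀ n, B n ⊆ A)
    (hd : Pairwise (Function.onFun Disjoint B)) (hx : ∀ n, ‖x n‖ ≤ 1) :
    ENNReal.ofReal ‖∑ n ∈ Finset.range N, μ (B n) (x n)‖ ≤ semivar μ A := by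
  unfold semivar
  exact le_iSup_of_le N (le_iSup_of_le B (le_iSup_of_le hm (le_iSup_of_le hs
    (le_iSup_of_le hd (le_iSup_of_le x (le_iSup_of_le hx le_rfl))))))

lemma semivar_le {A : Set Z} {c : ℝ≥0∞}
    (h : ∀ (N : ℕ) (B : ℕ → Set Z) (x : ℕ → E), (∀ n, MeasurableSet (B n)) →
      (∀ n, B n ⊆ A) → Pairwise (Function.onFun Disjoint B) → (∀ n, ‖x n‖ ≤ 1) →
      ENNReal.ofReal ‖∑ n ∈ Finset.range N, μ (B n) (x n)‖ ≤ c) :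
    semivar μ A ≤ c := by
  unfold semivar
  exact iSup_le fun N => iSup_le fun B => iSup_le fun hm => iSup_le fun hs =>
    iSup_le fun hd => iSup_le fun x => iSup_le fun hx => h N B x hm hs hd hx

lemma semivar_mono {A A' : Set Z} (h : A ⊆ A') : semivar μ A ≤ semivar μ A' :=
  semivar_le fun N B x hm hs hd hx =>
    le_semivar N B x hm (fun n => (hs n).trans h) hd hx

lemma semivar_top_exists {A : Set Z} (h : semivar μ A = ⊤) (r : ℝ) :
    ∃ (N : ℕ) (B : ℕ → Set Z) (x : ℕ → E), (∀ n, MeasurableSet (B n)) ∧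
      (∀ n, B n ⊆ A) ∧ Pairwise (Function.onFun Disjoint B) ∧ (∀ n, ‖x n‖ ≤ 1) ∧
      r ≤ ‖∑ n ∈ Finset.range N, μ (B n) (x n)‖ := by
  have h1 : ENNReal.ofReal r < semivar μ A := h ▸ ENNReal.ofReal_lt_top
  unfold semivar at h1
  simp only [lt_iSup_iff] at h1
  obtain ⟨N, B, hm, hs, hd, x, hx, hlt⟩ := h1
  refine ⟨N, B, x, hm, hs, hd, hx, ?_⟩
  by_contra hc
  push_neg at hc
  exact absurd (ENNReal.ofReal_le_ofReal hc.le) (not_le.2 hlt)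

lemma nat_rec_exists {σ : Type*} (init : σ) (P : σ → Prop) (R : ℕ → σ → σ → Prop)
    (h0 : P init) (hstep : ∀ n s, P s → ∃ t, P t ∧ R n s t) :
    ∃ f : ℕ → σ, f 0 = init ∧ (∀ n, P (f n)) ∧ ∀ n, R n (f n) (f (n + 1)) := by
  choose g hg1 hg2 using hstep
  let f : ℕ → {s : σ // P s} := fun n =>
    Nat.rec ⟨init, h0⟩ (fun n p => ⟨g n p.1 p.2, hg1 n p.1 p.2⟩) n
  exact ⟨fun n => (f n).1, rfl, fun n => (f n).2, fun n => hg2 n (f n).1 (f n).2⟩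

end aux2

section aux3

variable {Z E F : Type*} [MeasurableSpace Z]
  [NormedAddCommGroup E] [NormedSpace ℝ E] [NormedAddCommGroup F] [NormedSpace ℝ F]

/-- `μ` is "unbounded" on `A`. -/
def Unb (μ : Set Z → E →L[ℝ] F) (A : Set Z) : Prop :=
  ∀ r : ℝ, ∃ (B : Set Z) (x : E), MeasurableSet B ∧ B ⊆ A ∧ ‖x‖ ≤ 1 ∧ r ≤ ‖μ B x‖

variable {μ : Set Z → E →L[ℝ] F}

lemma unb_dich (hμ : IsIMeasure μ) {A B : Set Z} (hBm : MeasurableSet B) (hBA : B ⊆ A)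
    (hU : Unb μ A) : Unb μ B ∨ Unb μ (A \ B) := by
  by_contra hno
  push_neg at hno
  obtain ⟨h1, h2⟩ := hno
  unfold Unb at h1 h2
  push_neg at h1 h2
  obtain ⟨r1, hr1⟩ := h1
  obtain ⟨r2, hr2⟩ := h2
  obtain ⟨D, x, hDm, hDA, hx, hge⟩ := hU (r1 + r2)
  have hsplit : μ D x = μ (D ∩ B) x + μ (D \ B) x := by
    have h := imeas_union_two hμ (hDm.inter hBm) (hDm.diff hBm)
      (disjoint_sdiff_self_right.mono_left Set.inter_subset_right) x
    rwa [Set.inter_union_diff] at h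
  have e1 : ‖μ (D ∩ B) x‖ < r1 := hr1 (D ∩ B) x (hDm.inter hBm) Set.inter_subset_right hx
  have e2 : ‖μ (D \ B) x‖ < r2 := hr2 (D \ B) x (hDm.diff hBm)
    (fun z hz => ⟨hDA hz.1, hz.2⟩) hx
  have hlt : ‖μ D x‖ < r1 + r2 := by
    rw [hsplit]
    exact lt_of_le_of_lt (norm_add_le _ _) (add_lt_add e1 e2)
  linarith

lemma unb_step (hμ : IsIMeasure μ) {A : Set Z} (hAm : MeasurableSet A) (hU : Unb μ A)
    (k : ℝ) : ∃ (D : Set Z) (x : E), MeasurableSet D ∧ D ⊆ A ∧ ‖x‖ ≤ 1 ∧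
      k ≤ ‖μ D x‖ ∧ Unb μ (A \ D) := by
  obtain ⟨B, x, hBm, hBA, hx, hge⟩ := hU (k + ‖μ A‖)
  rcases unb_dich hμ hBm hBA hU with hc | hc
  · refine ⟨A \ B, x, hAm.diff hBm, Set.diff_subset, hx, ?_, ?_⟩
    · have hd : μ (A \ B) x = μ A x - μ B x := imeas_diff hμ hAm hBm hBA x
      have hAx : ‖μ A x‖ ≤ ‖μ A‖ := by
        calc ‖μ A x‖ ≤ ‖μ A‖ * ‖x‖ := (μ A).le_opNorm x
          _ ≤ ‖μ A‖ * 1 := mul_le_mul_of_nonneg_left hx (norm_nonneg _)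
          _ = ‖μ A‖ := mul_one _
      have hge2 : ‖μ B x‖ - ‖μ A x‖ ≤ ‖μ (A \ B) x‖ := by
        rw [hd, norm_sub_rev]
        exact norm_sub_norm_le _ _
      linarith
    · rwa [Set.diff_diff_cancel_left hBA]
  · exact ⟨B, x, hBm, hBA, hx, le_trans (by linarith [norm_nonneg (μ A)]) hge, hc⟩

lemma exists_bound (hμ : IsIMeasure μ) :
    ∃ M : ℝ, 0 ≤ M ∧ ∀ B : Set Z, MeasurableSet B → ∀ x : E, ‖x‖ ≤ 1 → ‖μ B x‖ ≤ M := by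
  by_contra hcon
  push_neg at hcon
  have hUnbUniv : Unb μ (Set.univ : Set Z) := by
    intro r
    obtain ⟨B, hBm, x, hx, hgt⟩ := hcon (max r 0) (le_max_right _ _)
    exact ⟨B, x, hBm, Set.subset_univ _, hx, le_trans (le_max_left _ _) hgt.le⟩
  obtain ⟨f, hf0, hfP, hfR⟩ := nat_rec_exists (Set.univ : Set Z)
    (fun A => MeasurableSet A ∧ Unb μ A)
    (fun n A A' => ∃ (D : Set Z) (x : E), A' = A \ D ∧ MeasurableSet D ∧ D ⊆ A ∧
      ‖x‖ ≤ 1 ∧ (n : ℝ) ≤ ‖μ D x‖)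
    ⟨MeasurableSet.univ, hUnbUniv⟩
    (by
      rintro n A ⟨hAm, hU⟩
      obtain ⟨D, x, hDm, hDA, hx, hk, hU'⟩ := unb_step hμ hAm hU n
      exact ⟨A \ D, ⟨hAm.diff hDm, hU'⟩, D, x, rfl, hDm, hDA, hx, hk⟩)
  choose D x hEq hDm hDA hx hk using hfR
  have hanti : Antitone f := antitone_nat_of_succ_le fun n => by
    rw [hEq n]; exact Set.diff_subset
  have claim : ∀ m n, m < n → Disjoint (D m) (D n) := by
    intro m n h
    have h2 : f n ⊆ f m \ D m := by
      rw [← hEq m]; exact hanti h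
    exact disjoint_sdiff_self_right.mono_right ((hDA n).trans h2)
  have hpair : Pairwise (Function.onFun Disjoint D) := by
    intro m n hmn
    rcases lt_or_gt_of_ne hmn with h | h
    · exact claim m n h
    · exact (claim n m h).symm
  obtain ⟨y, hy⟩ := hμ.2 D hDm hpair x ⟨1, hx⟩
  have hterm : Tendsto (fun n => μ (D n) (x n)) atTop (𝓝 0) := by
    have h2 := (hy.comp (tendsto_add_atTop_nat 1)).sub hy
    simp only [Function.comp, Finset.sum_range_succ, add_sub_cancel_left, sub_self] at h2
    exact h2
  have hev : ∀ᶠ n in atTop, ‖μ (D n) (x n)‖ < 1 :=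
    (by simpa using hterm.norm : Tendsto (fun n => ‖μ (D n) (x n)‖) atTop (𝓝 0)).eventually_lt_const one_pos
  obtain ⟨n, h1, h2⟩ := (hev.and (eventually_ge_atTop 1)).exists
  have : (n : ℝ) ≤ ‖μ (D n) (x n)‖ := hk n
  have : (1 : ℝ) ≤ (n : ℝ) := by exact_mod_cast h2
  linarith

end aux3

section aux4

variable {Z E F : Type*} [MeasurableSpace Z]
  [NormedAddCommGroup E] [NormedSpace ℝ E] [NormedAddCommGroup F] [NormedSpace ℝ F]
  {μ : Set Z → E →L[ℝ] F}

lemma semivar_subadd (hμ : IsIMeasure μ) {A : Set Z} (N : ℕ) (B : ℕ → Set Z)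
    (hm : ∀ i, MeasurableSet (B i)) (hd : Pairwise (Function.onFun Disjoint B))
    (hsub : ∀ i, B i ⊆ A) (hpad : ∀ i, N ≤ i → B i = ∅) :
    semivar μ A ≤ (∑ i ∈ Finset.range N, semivar μ (B i)) + semivar μ (A \ ⋃ i, B i) := by
  refine semivar_le fun K D xd hDm hDs hDd hxd => ?_
  have key : ∀ m, μ (D m) (xd m) =
      (∑ i ∈ Finset.range N, μ (D m ∩ B i) (xd m)) + μ (D m \ ⋃ i, B i) (xd m) := by
    intro m
    set P : ℕ → Set Z :=
      fun i => if i < N then D m ∩ B i else if i = N then D m \ ⋃ i, B i else ∅ with hP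
    have hPm : ∀ i, MeasurableSet (P i) := by
      intro i
      simp only [hP]
      split
      · exact (hDm m).inter (hm i)
      · split
        · exact (hDm m).diff (MeasurableSet.iUnion hm)
        · exact MeasurableSet.empty
    have hPd : Pairwise (Function.onFun Disjoint P) := by
      have hkey : ∀ i j, i ≠ j → Disjoint (P i) (P j) := by
        intro i j hij
        by_cases hi : i < N
        · by_cases hj : j < N
          · simp only [hP, if_pos hi, if_pos hj]
            exact (hd hij).mono Set.inter_subset_right Set.inter_subset_right
          · by_cases hjN : j = N
            · simp only [hP, if_pos hi, if_neg hj, if_pos hjN]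
              exact (disjoint_sdiff_self_right.mono_left
                ((Set.inter_subset_right).trans (Set.subset_iUnion B i))).symm.symm
            · simp [hP, if_pos hi, if_neg hj, if_neg hjN]
        · by_cases hiN : i = N
          · by_cases hj : j < N
            · simp only [hP, if_neg hi, if_pos hiN, if_pos hj]
              exact (disjoint_sdiff_self_right.mono_left
                ((Set.inter_subset_right).trans (Set.subset_iUnion B j))).symm
            · have hjn : ¬ j = N := by omega
              simp [hP, if_neg hj, if_neg hjn]
          · simp [hP, if_neg hi, if_neg hiN]
      exact fun i j hij => hkey i j hij
    have hPpad : ∀ i, N + 1 ≤ i → P i = ∅ := by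
      intro i hi
      have h1 : ¬ i < N := by omega
      have h2 : ¬ i = N := by omega
      simp [hP, h1, h2]
    have h := imeas_finpart hμ (N + 1) P hPm hPd hPpad (xd m)
    have hUP : (⋃ i, P i) = D m := by
      apply Set.Subset.antisymm
      · refine Set.iUnion_subset fun i => ?_
        simp only [hP]
        split
        · exact Set.inter_subset_left
        · split
          · exact Set.diff_subset
          · exact Set.empty_subset _
      · intro z hz
        by_cases hzB : z ∈ ⋃ i, B i
        · obtain ⟨i, hzi⟩ := Set.mem_iUnion.mp hzB
          have hiN : i < N := by
            by_contra hc
            rw [hpad i (Nat.le_of_not_lt hc)] at hzi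
            exact hzi
          exact Set.mem_iUnion.mpr ⟨i, by simp only [hP, if_pos hiN]; exact ⟨hz, hzi⟩⟩
        · refine Set.mem_iUnion.mpr ⟨N, ?_⟩
          simp only [hP, lt_irrefl, if_neg (lt_irrefl N), if_pos rfl]
          exact ⟨hz, hzB⟩
    rw [hUP] at h
    rw [h, Finset.sum_range_succ]
    congr 1
    · refine Finset.sum_congr rfl fun i hi => ?_
      simp only [hP, if_pos (Finset.mem_range.mp hi)]
    · simp only [hP, if_neg (lt_irrefl N)]
      simp
  have hsum : ∑ m ∈ Finset.range K, μ (D m) (xd m) =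
      (∑ i ∈ Finset.range N, ∑ m ∈ Finset.range K, μ (D m ∩ B i) (xd m)) +
      ∑ m ∈ Finset.range K, μ (D m \ ⋃ i, B i) (xd m) := by
    simp_rw [key]
    rw [Finset.sum_add_distrib, Finset.sum_comm]
  rw [hsum]
  have hn : ‖(∑ i ∈ Finset.range N, ∑ m ∈ Finset.range K, μ (D m ∩ B i) (xd m)) +
      ∑ m ∈ Finset.range K, μ (D m \ ⋃ i, B i) (xd m)‖ ≤
      (∑ i ∈ Finset.range N, ‖∑ m ∈ Finset.range K, μ (D m ∩ B i) (xd m)‖) +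
      ‖∑ m ∈ Finset.range K, μ (D m \ ⋃ i, B i) (xd m)‖ :=
    le_trans (norm_add_le _ _) (add_le_add (norm_sum_le _ _) le_rfl)
  refine le_trans (ENNReal.ofReal_le_ofReal hn) ?_
  rw [ENNReal.ofReal_add (Finset.sum_nonneg fun i _ => norm_nonneg _) (norm_nonneg _),
    ENNReal.ofReal_sum_of_nonneg (fun i _ => norm_nonneg _)]
  refine add_le_add (Finset.sum_le_sum fun i _ => ?_) ?_
  · exact le_semivar K (fun m => D m ∩ B i) xd (fun m => (hDm m).inter (hm i))
      (fun m => Set.inter_subset_right)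
      (fun m n hmn => (hDd hmn).mono Set.inter_subset_left Set.inter_subset_left) hxd
  · exact le_semivar K (fun m => D m \ ⋃ i, B i) xd
      (fun m => (hDm m).diff (MeasurableSet.iUnion hm))
      (fun m z hz => ⟨hDs m hz.1, hz.2⟩)
      (fun m n hmn => (hDd hmn).mono Set.diff_subset Set.diff_subset) hxd

end aux4

section aux5

variable {Z E F : Type*} [MeasurableSpace Z]
  [NormedAddCommGroup E] [NormedSpace ℝ E] [NormedAddCommGroup F] [NormedSpace ℝ F]
  {μ : Set Z → E →L[ℝ] F}

lemma key_step (hμ : IsIMeasure μ) (M : ℝ) (hM0 : 0 ≤ M)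
    (hM : ∀ B : Set Z, MeasurableSet B → ∀ x : E, ‖x‖ ≤ 1 → ‖μ B x‖ ≤ M)
    {A : Set Z} (hA : semivar μ A = ⊤) (k : ℝ) :
    ∃ (N : ℕ) (B : ℕ → Set Z) (x : ℕ → E), (∀ i, MeasurableSet (B i)) ∧
      (∀ i, B i ⊆ A) ∧ Pairwise (Function.onFun Disjoint B) ∧ (∀ i, ‖x i‖ ≤ 1) ∧
      (∀ i, N ≤ i → B i = ∅) ∧ k ≤ ‖∑ i ∈ Finset.range N, μ (B i) (x i)‖ ∧
      semivar μ (A \ ⋃ i, B i) = ⊤ := by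
  obtain ⟨N, B0, x, hm0, hs0, hd0, hx0, hge⟩ := semivar_top_exists hA (k + M)
  set B' : ℕ → Set Z := fun i => if i < N then B0 i else ∅ with hB'
  have hm' : ∀ i, MeasurableSet (B' i) := by
    intro i; simp only [hB']; split
    · exact hm0 i
    · exact MeasurableSet.empty
  have hs' : ∀ i, B' i ⊆ A := by
    intro i; simp only [hB']; split
    · exact hs0 i
    · exact Set.empty_subset _
  have hd' : Pairwise (Function.onFun Disjoint B') := by
    intro i j hij
    simp only [Function.onFun, hB']
    by_cases hi : i < N <;> by_cases hj : j < N <;>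
      simp [hi, hj, hd0 hij]
  have hpad' : ∀ i, N ≤ i → B' i = ∅ := by
    intro i hi; simp [hB', Nat.not_lt_of_le hi]
  have hsumeq : ∑ i ∈ Finset.range N, μ (B' i) (x i)
      = ∑ i ∈ Finset.range N, μ (B0 i) (x i) :=
    Finset.sum_congr rfl fun i hi => by
      simp only [hB', if_pos (Finset.mem_range.mp hi)]
  have hsub := semivar_subadd hμ N B' hm' hd' hs' hpad'
  rw [hA] at hsub
  by_cases hc : semivar μ (A \ ⋃ i, B' i) = ⊤
  · exact ⟨N, B', x, hm', hs', hd', hx0, hpad',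
      by rw [hsumeq]; linarith, hc⟩
  · have hex : ∃ i0 ∈ Finset.range N, semivar μ (B' i0) = ⊤ := by
      by_contra hno
      push_neg at hno
      have h1 : (∑ i ∈ Finset.range N, semivar μ (B' i)) + semivar μ (A \ ⋃ i, B' i) ≠ ⊤ := by
        apply ENNReal.add_ne_top.mpr
        exact ⟨by
          refine (ENNReal.sum_lt_top.mpr fun i hi => ?_).ne
          exact lt_top_iff_ne_top.mpr (hno i hi), hc⟩
      exact h1 (top_le_iff.mp hsub)
    obtain ⟨i0, hi0, htop⟩ := hex
    have hi0N : i0 < N := Finset.mem_range.mp hi0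
    set B'' : ℕ → Set Z := fun i => if i = i0 then ∅ else B' i with hB''
    set x'' : ℕ → E := fun i => if i = i0 then 0 else x i with hx''
    have hm'' : ∀ i, MeasurableSet (B'' i) := by
      intro i; simp only [hB'']; split
      · exact MeasurableSet.empty
      · exact hm' i
    have hs'' : ∀ i, B'' i ⊆ A := by
      intro i; simp only [hB'']; split
      · exact Set.empty_subset _
      · exact hs' i
    have hd'' : Pairwise (Function.onFun Disjoint B'') := by
      intro i j hij
      simp only [Function.onFun, hB'']
      by_cases hi : i = i0 <;> by_cases hj : j = i0 <;>
        simp [hi, hj, hd' hij]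
    have hxle : ∀ i, ‖x'' i‖ ≤ 1 := by
      intro i; simp only [hx'']; split
      · simpa using zero_le_one
      · exact hx0 i
    have hpad'' : ∀ i, N ≤ i → B'' i = ∅ := by
      intro i hi
      have : i ≠ i0 := by omega
      simp [hB'', this, hpad' i hi]
    have hsum'' : ∑ i ∈ Finset.range N, μ (B'' i) (x'' i)
        = (∑ i ∈ Finset.range N, μ (B' i) (x i)) - μ (B' i0) (x i0) := by
      have e1 : ∑ i ∈ Finset.range N, μ (B'' i) (x'' i)
          = ∑ i ∈ Finset.range N \ {i0}, μ (B'' i) (x'' i) + μ (B'' i0) (x'' i0) :=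
        (Finset.sum_eq_sum_sdiff_singleton_add hi0 _)
      have e2 : ∑ i ∈ Finset.range N, μ (B' i) (x i)
          = ∑ i ∈ Finset.range N \ {i0}, μ (B' i) (x i) + μ (B' i0) (x i0) :=
        (Finset.sum_eq_sum_sdiff_singleton_add hi0 _)
      have e3 : ∑ i ∈ Finset.range N \ {i0}, μ (B'' i) (x'' i)
          = ∑ i ∈ Finset.range N \ {i0}, μ (B' i) (x i) := by
        refine Finset.sum_congr rfl fun i hi => ?_
        have hne : i ≠ i0 := by
          have := (Finset.mem_sdiff.mp hi).2
          simpa using this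
        simp [hB'', hx'', hne]
      have e4 : μ (B'' i0) (x'' i0) = 0 := by
        simp [hB'', hx'']
      rw [e1, e3, e4, e2]
      abel
    have hnorm : k ≤ ‖∑ i ∈ Finset.range N, μ (B'' i) (x'' i)‖ := by
      rw [hsum'', hsumeq]
      have h1 : ‖μ (B' i0) (x i0)‖ ≤ M := hM _ (hm' i0) _ (hx0 i0)
      have h2 : ‖∑ i ∈ Finset.range N, μ (B' i) (x i)‖ - ‖μ (B' i0) (x i0)‖ ≤
          ‖(∑ i ∈ Finset.range N, μ (B' i) (x i)) - μ (B' i0) (x i0)‖ :=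
        norm_sub_norm_le _ _
      rw [hsumeq] at h2
      linarith
    have hrem : semivar μ (A \ ⋃ i, B'' i) = ⊤ := by
      have hsubset : B' i0 ⊆ A \ ⋃ i, B'' i := by
        intro z hz
        refine ⟨hs' i0 hz, ?_⟩
        intro hzU
        obtain ⟨i, hzi⟩ := Set.mem_iUnion.mp hzU
        by_cases hi : i = i0
        · rw [hB''] at hzi; simp [hi] at hzi
        · have : z ∈ B' i := by
            rw [hB''] at hzi; simpa [hi] using hzi
          exact Set.disjoint_left.mp (hd' hi) this hz
      exact top_le_iff.mp (htop ▸ semivar_mono hsubset)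
    exact ⟨N, B'', x'', hm'', hs'', hd'', hxle, hpad'', hnorm, hrem⟩

end aux5


/-- Every i-measure has finite total semivariation. -/
theorem iMeasure_semivar_ne_top {Z E F : Type*} [MeasurableSpace Z]
    [NormedAddCommGroup E] [NormedSpace ℝ E]
    [NormedAddCommGroup F] [NormedSpace ℝ F] [CompleteSpace F]
    (μ : Set Z → E →L[ℝ] F) (hμ : IsIMeasure μ) :
    semivar μ Set.univ ≠ ⊤ := by
  intro htop
  obtain ⟨M, hM0, hM⟩ := exists_bound hμ
  obtain ⟨f, hf0, hfP, hfR⟩ := nat_rec_exists (Set.univ : Set Z)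
    (fun A => semivar μ A = ⊤)
    (fun j A A' => ∃ (N : ℕ) (B : ℕ → Set Z) (x : ℕ → E), (∀ i, MeasurableSet (B i)) ∧
      (∀ i, B i ⊆ A) ∧ Pairwise (Function.onFun Disjoint B) ∧ (∀ i, ‖x i‖ ≤ 1) ∧
      (∀ i, N ≤ i → B i = ∅) ∧ 1 ≤ N ∧
      (j + 1 : ℝ) ≤ ‖∑ i ∈ Finset.range N, μ (B i) (x i)‖ ∧
      A' = A \ ⋃ i, B i)
    htop
    (by
      intro j A hA
      obtain ⟨N, B, x, h1, h2, h3, h4, h5, h6, h7⟩ := key_step hμ M hM0 hM hA (j + 1)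
      have hN : 1 ≤ N := by
        rcases Nat.eq_zero_or_pos N with h0 | h0
        · exfalso
          rw [h0] at h6
          simp only [Finset.range_zero, Finset.sum_empty, norm_zero] at h6
          have hpos : (0 : ℝ) < j + 1 := by positivity
          linarith
        · exact h0
      exact ⟨A \ ⋃ i, B i, h7, N, B, x, h1, h2, h3, h4, h5, hN, h6, rfl⟩)
  choose N B x hm hs hdj hx hpad hN1 hsum hEq using hfR
  set o : ℕ → ℕ := fun j => ∑ k ∈ Finset.range j, N k with ho
  have hosucc : ∀ j, o (j + 1) = o j + N j := fun j => Finset.sum_range_succ _ _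
  have homono : StrictMono o := strictMono_nat_of_lt_succ fun j => by
    have := hN1 j
    rw [hosucc]
    omega
  have hole : ∀ j, j ≤ o j := by
    intro j
    calc j = ∑ _k ∈ Finset.range j, 1 := by simp
      _ ≤ o j := Finset.sum_le_sum fun k _ => hN1 k
  set jOf : ℕ → ℕ := fun n => Nat.findGreatest (fun j => o j ≤ n) (n + 1) with hjOfdef
  have ho0 : o 0 = 0 := Finset.sum_range_zero _
  have hjOf_le : ∀ n, o (jOf n) ≤ n := by
    intro n
    rw [hjOfdef]
    exact Nat.findGreatest_spec (m := 0) (P := fun j => o j ≤ n) (by omega) (by omega)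
  have hjOf_ge : ∀ (n j : ℕ), j ≤ n + 1 → o j ≤ n → j ≤ jOf n := by
    intro n j h1 h2
    rw [hjOfdef]
    exact Nat.le_findGreatest (P := fun j => o j ≤ n) h1 h2
  have hjOf_lt : ∀ n, n < o (jOf n + 1) := by
    intro n
    by_contra hcon
    push_neg at hcon
    have hle : jOf n + 1 ≤ n + 1 := by
      have := hole (jOf n + 1)
      omega
    have := hjOf_ge n (jOf n + 1) hle hcon
    omega
  have hjOf_eq : ∀ j i, i < N j → jOf (o j + i) = j := by
    intro j i hi
    have h1 : o j ≤ o j + i := Nat.le_add_right _ _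
    have h2 : o j + i < o (j + 1) := by rw [hosucc]; omega
    have hge : j ≤ jOf (o j + i) := hjOf_ge (o j + i) j (by have := hole j; omega) h1
    have hlt : jOf (o j + i) < j + 1 := by
      by_contra hcon
      push_neg at hcon
      have h3 := homono.monotone hcon
      have h4 := hjOf_le (o j + i)
      omega
    omega
  set C : ℕ → Set Z := fun n => B (jOf n) (n - o (jOf n)) with hC
  set y : ℕ → E := fun n => x (jOf n) (n - o (jOf n)) with hy
  have hCm : ∀ n, MeasurableSet (C n) := fun n => hm _ _
  have hfanti : Antitone f := antitone_nat_of_succ_le fun j => by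
    rw [hEq j]; exact Set.diff_subset
  have hdisjC : Pairwise (Function.onFun Disjoint C) := by
    have hcl : ∀ m n, m < n → Disjoint (C m) (C n) := by
      intro m n hmn
      rcases lt_trichotomy (jOf m) (jOf n) with h | h | h
      · have hsub1 : C n ⊆ f (jOf n) := hs (jOf n) _
        have hsub2 : f (jOf n) ⊆ f (jOf m + 1) := hfanti h
        rw [hEq (jOf m)] at hsub2
        refine Disjoint.mono (Set.subset_iUnion (B (jOf m)) (m - o (jOf m)))
          (hsub1.trans hsub2) ?_
        exact disjoint_sdiff_self_right
      · have hne : m - o (jOf m) ≠ n - o (jOf n) := by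
          intro heq
          have h1 := hjOf_le m
          have h2 := hjOf_le n
          have : o (jOf m) = o (jOf n) := by rw [h]
          omega
        have := hdj (jOf m) hne
        simp only [Function.onFun] at this
        rw [hC]
        simp only
        rw [h] at this ⊢
        exact this
      · exfalso
        have h1 : o (jOf n + 1) ≤ o (jOf m) := homono.monotone h
        have h2 := hjOf_le m
        have h3 := hjOf_lt n
        omega
    intro m n hmn
    rcases lt_or_gt_of_ne hmn with h | h
    · exact hcl m n h
    · exact (hcl n m h).symm
  obtain ⟨yl, hyl⟩ := hμ.2 C hCm hdisjC y ⟨1, fun n => hx _ _⟩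
  have hblock : ∀ j, (∑ n ∈ Finset.range (o (j + 1)), μ (C n) (y n)) -
      ∑ n ∈ Finset.range (o j), μ (C n) (y n) =
      ∑ i ∈ Finset.range (N j), μ (B j i) (x j i) := by
    intro j
    rw [← Finset.sum_Ico_eq_sub _ (homono.monotone (Nat.le_succ j))]
    rw [Finset.sum_Ico_eq_sum_range]
    have hlen : o (j + 1) - o j = N j := by rw [hosucc]; omega
    rw [hlen]
    refine Finset.sum_congr rfl fun i hi => ?_
    have hi' : i < N j := Finset.mem_range.mp hi
    have hj := hjOf_eq j i hi'
    rw [hC, hy]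
    simp only
    rw [hj, Nat.add_sub_cancel_left]
  have htend : Tendsto (fun j => ∑ i ∈ Finset.range (N j), μ (B j i) (x j i))
      atTop (𝓝 0) := by
    have h1 : Tendsto (fun j => ∑ n ∈ Finset.range (o (j + 1)), μ (C n) (y n))
        atTop (𝓝 yl) := hyl.comp ((homono.tendsto_atTop).comp (tendsto_add_atTop_nat 1))
    have h2 : Tendsto (fun j => ∑ n ∈ Finset.range (o j), μ (C n) (y n))
        atTop (𝓝 yl) := hyl.comp homono.tendsto_atTop
    have h3 := h1.sub h2
    rw [sub_self] at h3
    exact h3.congr fun j => hblock j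
  have hev : ∀ᶠ j in atTop,
      ‖∑ i ∈ Finset.range (N j), μ (B j i) (x j i)‖ < 1 :=
    (by simpa using htend.norm :
      Tendsto (fun j => ‖∑ i ∈ Finset.range (N j), μ (B j i) (x j i)‖) atTop
        (𝓝 0)).eventually_lt_const one_pos
  obtain ⟨j, hj1⟩ := hev.exists
  have h1 := hsum j
  have h2 : (1 : ℝ) ≤ (j : ℝ) + 1 := by
    have : (0 : ℝ) ≤ (j : ℝ) := Nat.cast_nonneg j
    linarith
  linarith
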